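/- Let f be a probability density on (0,1) satisfying 0 < c_f ≤ f(t) ≤ C_f for all t ∈ (0,1). (a) There exist constants c₁ > 0 and δ > 0, depending only on c_f and C_f, such that for all n ≥ 1, all integers m ≥ 2, and all h with m·h ≥ δ: if (t_{i,j}), i = 1,…,n, j = 1,…,m, are i.i.d. with density f and Ñ_h = #{(i,j) : 1 ≤ i ≤ n, 1 ≤ j ≤ m−1, t_{i,(j+1)} − t_{i,(j)} < h}, then c₁·n·m ≤ E[Ñ_h] ≤ n·(m−1). (b) Moreover, for sequences m_n → ∞ and h_n > 0 with c_f·m_n·h_n − log(m_n·n) → ∞ as n → ∞, one has P(Ñ_{h_n} = n·(m_n − 1)) → 1, i.e., with probability tending to one every consecutive spacing of every individual is smaller than h_n. -/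

import Mathlib

open MeasureTheory ProbabilityTheory Filter
open scoped ENNReal

/-- The `j`-th order statistic (0-indexed) of the tuple `v`. -/
noncomputable def sortedVal {m : ℕ} (v : Fin m → ℝ) (j : ℕ) : ℝ :=
  if h : j < m then v (Tuple.sort v ⟨j, h⟩) else 0

/-- `Ñ_h`: the number of pairs `(i, j)`, `1 ≤ i ≤ n`, `1 ≤ j ≤ m - 1`, such that the
consecutive order-statistic spacing `t_{i,(j+1)} - t_{i,(j)}` is smaller than `h`. -/
noncomputable def spacingCount (n m : ℕ) (T : Fin n → Fin m → ℝ) (h : ℝ) : ℝ :=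
  ∑ i : Fin n, ∑ j ∈ Finset.range (m - 1),
    if sortedVal (fun k => T i k) (j + 1) - sortedVal (fun k => T i k) j < h then (1 : ℝ) else 0

lemma sortedVal_mono {m : ℕ} (v : Fin m → ℝ) {i j : ℕ} (hij : i ≤ j) (hj : j < m) :
    sortedVal v i ≤ sortedVal v j := by
  have hi : i < m := Nat.lt_of_le_of_lt hij hj
  rw [sortedVal, sortedVal, dif_pos hi, dif_pos hj]
  exact Tuple.monotone_sort v (Fin.mk_le_mk.2 hij)

lemma sortedVal_mem {m : ℕ} (v : Fin m → ℝ) {j : ℕ} (hj : j < m) (s : Set ℝ)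
    (hv : ∀ k, v k ∈ s) : sortedVal v j ∈ s := by
  rw [sortedVal, dif_pos hj]; exact hv _

lemma sortedVal_le_iff {m : ℕ} (v : Fin m → ℝ) {j : ℕ} (hj : j < m) (x : ℝ) :
    sortedVal v j ≤ x ↔ j + 1 ≤ (Finset.univ.filter fun k => v k ≤ x).card := by
  rw [sortedVal, dif_pos hj]
  constructor
  · intro hx
    have hsub : (Finset.Iic (⟨j, hj⟩ : Fin m)).image (Tuple.sort v) ⊆
        Finset.univ.filter fun k => v k ≤ x := by
      intro k hk
      simp only [Finset.mem_image, Finset.mem_Iic] at hk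
      obtain ⟨i, hi, rfl⟩ := hk
      simp only [Finset.mem_filter, Finset.mem_univ, true_and]
      exact le_trans (Tuple.monotone_sort v hi) hx
    calc j + 1 = ((Finset.Iic (⟨j, hj⟩ : Fin m)).image (Tuple.sort v)).card := by
          rw [Finset.card_image_of_injective _ (Tuple.sort v).injective, Fin.card_Iic]
      _ ≤ _ := Finset.card_le_card hsub
  · intro hc
    by_contra hx
    push_neg at hx
    have hsub : (Finset.univ.filter fun k => v k ≤ x) ⊆
        (Finset.Iio (⟨j, hj⟩ : Fin m)).image (Tuple.sort v) := by
      intro k hk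
      simp only [Finset.mem_filter, Finset.mem_univ, true_and] at hk
      refine Finset.mem_image.2 ⟨(Tuple.sort v).symm k, ?_, by simp⟩
      simp only [Finset.mem_Iio]
      by_contra hge
      push_neg at hge
      have h2 := Tuple.monotone_sort v hge
      simp only [Function.comp_apply, Equiv.apply_symm_apply] at h2
      exact absurd (le_trans h2 hk) (not_le.2 hx)
    have h3 := Finset.card_le_card hsub
    rw [Finset.card_image_of_injective _ (Tuple.sort v).injective, Fin.card_Iio] at h3
    have : ((⟨j, hj⟩ : Fin m) : ℕ) = j := rfl
    omega

lemma measurable_sortedVal {m : ℕ} (j : ℕ) :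
    Measurable fun v : Fin m → ℝ => sortedVal v j := by
  rcases lt_or_ge j m with hj | hj
  · apply measurable_of_Iic
    intro x
    have he : (fun v : Fin m → ℝ => sortedVal v j) ⁻¹' Set.Iic x
        = (fun v : Fin m → ℝ => (Finset.univ.filter fun k => v k ≤ x).card) ⁻¹'
            Set.Ici (j + 1) := by
      ext v
      simp [Set.mem_preimage, sortedVal_le_iff v hj x]
    rw [he]
    have hmeas : Measurable fun v : Fin m → ℝ =>
        (Finset.univ.filter fun k => v k ≤ x).card := by
      have : ∀ v : Fin m → ℝ, (Finset.univ.filter fun k => v k ≤ x).card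
          = ∑ k : Fin m, if v k ≤ x then 1 else 0 := by
        intro v; rw [Finset.card_filter]
      simp only [this]
      apply Finset.measurable_sum
      intro k _
      exact Measurable.ite ((measurable_pi_apply k) measurableSet_Iic)
        measurable_const measurable_const
    exact hmeas measurableSet_Ici
  · have : (fun v : Fin m → ℝ => sortedVal v j) = fun _ => 0 := by
      funext v; rw [sortedVal, dif_neg (not_lt.2 hj)]
    rw [this]; exact measurable_const

lemma count_upper {m : ℕ} (v : Fin m → ℝ) (h : ℝ) :
    (∑ j ∈ Finset.range (m-1), if sortedVal v (j+1) - sortedVal v j < h then (1:ℝ) else 0)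
      ≤ ((m - 1 : ℕ) : ℝ) := by
  calc (∑ j ∈ Finset.range (m-1), if sortedVal v (j+1) - sortedVal v j < h then (1:ℝ) else 0)
      ≤ ∑ _j ∈ Finset.range (m-1), (1:ℝ) :=
        Finset.sum_le_sum (fun j _ => by split <;> norm_num)
    _ = ((m - 1 : ℕ) : ℝ) := by simp

lemma count_eq_of_gaps_lt {m : ℕ} (v : Fin m → ℝ) (h : ℝ)
    (hall : ∀ j ∈ Finset.range (m-1), sortedVal v (j+1) - sortedVal v j < h) :
    (∑ j ∈ Finset.range (m-1), if sortedVal v (j+1) - sortedVal v j < h then (1:ℝ) else 0)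
      = ((m - 1 : ℕ) : ℝ) := by
  rw [Finset.sum_congr rfl (fun j hj => if_pos (hall j hj))]
  simp

lemma count_lower {m : ℕ} (hm : 2 ≤ m) (v : Fin m → ℝ)
    (hv : ∀ k, v k ∈ Set.Ioo (0:ℝ) 1) {h : ℝ} (hh : 0 < h) (hmh : 4 ≤ (m:ℝ) * h) :
    (m : ℝ)/4 ≤ ∑ j ∈ Finset.range (m-1),
      if sortedVal v (j+1) - sortedVal v j < h then (1:ℝ) else 0 := by
  classical
  set g : ℕ → ℝ := fun j => sortedVal v (j+1) - sortedVal v j with hg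
  have hsum : ∑ j ∈ Finset.range (m-1), g j = sortedVal v (m-1) - sortedVal v 0 :=
    Finset.sum_range_sub (fun j => sortedVal v j) (m-1)
  have h1 := sortedVal_mem v (Nat.sub_lt (by omega) one_pos) _ hv
  have h2 := sortedVal_mem v (show 0 < m by omega) _ hv
  have hglt : sortedVal v (m-1) - sortedVal v 0 < 1 := by
    have := h1.2; have := h2.1; linarith
  have hgnonneg : ∀ j ∈ Finset.range (m-1), 0 ≤ g j := by
    intro j hj
    rw [Finset.mem_range] at hj
    exact sub_nonneg.2 (sortedVal_mono v (Nat.le_succ j) (by omega))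
  set A := (Finset.range (m-1)).filter (fun j => ¬ (g j < h)) with hA
  have hA1 : (A.card : ℝ) * h ≤ 1 := by
    have e1 : (A.card : ℝ) * h = ∑ _j ∈ A, h := by
      rw [Finset.sum_const, nsmul_eq_mul]
    rw [e1]
    calc ∑ j ∈ A, h ≤ ∑ j ∈ A, g j :=
          Finset.sum_le_sum (fun j hj => not_lt.1 (Finset.mem_filter.1 hj).2)
      _ ≤ ∑ j ∈ Finset.range (m-1), g j :=
          Finset.sum_le_sum_of_subset_of_nonneg (Finset.filter_subset _ _)
            (fun j hj _ => hgnonneg j hj)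
      _ ≤ 1 := by rw [hsum]; linarith
  have hmR : (2:ℝ) ≤ (m:ℝ) := by exact_mod_cast hm
  have hAcard : (A.card : ℝ) ≤ (m:ℝ)/4 := by nlinarith
  have hcount : (∑ j ∈ Finset.range (m-1), if g j < h then (1:ℝ) else 0)
      = (((Finset.range (m-1)).filter (fun j => g j < h)).card : ℝ) := by
    rw [Finset.sum_boole]
  have hsplit : ((Finset.range (m-1)).filter (fun j => g j < h)).card + A.card
      = m - 1 := by
    rw [hA, Finset.card_filter_add_card_filter_not, Finset.card_range]
  have hcast : ((m - 1 : ℕ) : ℝ) = (m:ℝ) - 1 := by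
    have : 1 ≤ m := by omega
    push_cast [this]; ring
  have : (((Finset.range (m-1)).filter (fun j => g j < h)).card : ℝ)
      = (m:ℝ) - 1 - A.card := by
    have := congrArg (fun x : ℕ => (x : ℝ)) hsplit
    push_cast at this
    linarith
  rw [hcount, this]
  linarith

lemma mu_prob {Ω : Type} [MeasurableSpace Ω] (P : Measure Ω) [IsProbabilityMeasure P]
    (X : Ω → ℝ) (hX : Measurable X) (μ : Measure ℝ) (hlaw : Measure.map X P = μ) :
    IsProbabilityMeasure μ := by
  rw [← hlaw]
  exact Measure.isProbabilityMeasure_map hX.aemeasurable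

lemma ae_mem_Ioo {Ω : Type} [MeasurableSpace Ω] (P : Measure Ω) (f : ℝ → ℝ)
    (hf0 : ∀ x, x ∉ Set.Ioo (0:ℝ) 1 → f x = 0) (X : Ω → ℝ) (hX : Measurable X)
    (hlaw : Measure.map X P = volume.withDensity fun x => ENNReal.ofReal (f x)) :
    P {ω | X ω ∉ Set.Ioo (0:ℝ) 1} = 0 := by
  have h1 : Measure.map X P (Set.Ioo (0:ℝ) 1)ᶜ = 0 := by
    rw [hlaw, withDensity_apply _ measurableSet_Ioo.compl]
    have : ∀ᵐ x ∂(volume.restrict (Set.Ioo (0:ℝ) 1)ᶜ),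
        ENNReal.ofReal (f x) = 0 := by
      refine ae_restrict_of_forall_mem measurableSet_Ioo.compl ?_
      intro x hx
      rw [hf0 x hx]; simp
    rw [lintegral_congr_ae this, lintegral_zero]
  rw [Measure.map_apply hX measurableSet_Ioo.compl] at h1
  exact h1

lemma iIndep_row {Ω : Type} [MeasurableSpace Ω] {P : Measure Ω} {n m : ℕ}
    (T : Fin n → Fin m → Ω → ℝ)
    (hind : iIndepFun
      (fun (p : Fin n × Fin m) ω => T p.1 p.2 ω) P) (i : Fin n) :
    iIndepFun (fun l => T i l) P := by
  classical
  rw [iIndepFun_iff_measure_inter_preimage_eq_mul] at hind ⊢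
  intro S sets hmeas
  obtain ⟨e, he⟩ : ∃ e : Fin m ↪ Fin n × Fin m, ∀ l, e l = (i, l) :=
    ⟨⟨fun l => (i, l), fun a b hab => by simpa using congrArg Prod.snd hab⟩, fun l => rfl⟩
  have := hind (S.map e) (sets := fun p => sets p.2) (fun p hp => by
    simp only [Finset.mem_map] at hp
    obtain ⟨l, hl, rfl⟩ := hp
    simp only [he]
    exact hmeas l hl)
  have hset : (⋂ p ∈ S.map e, (fun ω => T p.1 p.2 ω) ⁻¹' sets p.2)
      = ⋂ l ∈ S, (T i l) ⁻¹' sets l := by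
    ext ω
    simp only [Set.mem_iInter, Finset.mem_map]
    constructor
    · intro hω l hl
      have := hω (e l) ⟨l, hl, rfl⟩
      simpa [he] using this
    · rintro hω p ⟨l, hl, rfl⟩
      simpa [he] using hω l hl
  have hprod : (∏ p ∈ S.map e, P ((fun ω => T p.1 p.2 ω) ⁻¹' sets p.2))
      = ∏ l ∈ S, P ((T i l) ⁻¹' sets l) := by
    rw [Finset.prod_map S e (fun p => P ((fun ω => T p.1 p.2 ω) ⁻¹' sets p.2))]
    exact Finset.prod_congr rfl fun l _ => by simp [he]
  rw [hset, hprod] at this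
  exact this

lemma map_fun_eq_pi {Ω : Type} [MeasurableSpace Ω] {P : Measure Ω}
    [IsProbabilityMeasure P] {m : ℕ} (Y : Fin m → Ω → ℝ) (hY : ∀ l, Measurable (Y l))
    (hind : iIndepFun Y P)
    (μ : Measure ℝ) [IsProbabilityMeasure μ]
    (hlaw : ∀ l, Measure.map (Y l) P = μ) :
    Measure.map (fun ω l => Y l ω) P = Measure.pi fun _ => μ := by
  refine (Measure.pi_eq (μ := fun _ => μ) fun s hs => ?_).symm
  rw [Measure.map_apply (measurable_pi_lambda _ hY) (MeasurableSet.univ_pi hs)]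
  have hset : (fun ω l => Y l ω) ⁻¹' Set.pi Set.univ s
      = ⋂ l ∈ (Finset.univ : Finset (Fin m)), (Y l) ⁻¹' s l := by
    ext ω; simp [Set.mem_pi]
  rw [hset, hind.measure_inter_preimage_eq_mul Finset.univ (fun l _ => hs l)]
  refine Finset.prod_congr rfl fun l _ => ?_
  rw [← hlaw l, Measure.map_apply (hY l) (hs l)]

lemma bad_bound {Ω : Type} [MeasurableSpace Ω] {P : Measure Ω} [IsProbabilityMeasure P]
    {cf : ℝ} (hcf : 0 < cf)
    {m' : ℕ} (Y : Fin (m' + 1) → Ω → ℝ) (hY : ∀ l, Measurable (Y l))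
    (hind : iIndepFun Y P)
    (f : ℝ → ℝ) (hfm : Measurable f) (hfl : ∀ x ∈ Set.Ioo (0:ℝ) 1, cf ≤ f x)
    (hlaw : ∀ l, Measure.map (Y l) P = volume.withDensity fun x => ENNReal.ofReal (f x))
    (h : ℝ) (hh : 0 < h) (k : Fin (m' + 1)) :
    P {ω | 0 < Y k ω ∧ Y k ω + h < 1 ∧ ∀ l, Y l ω ∉ Set.Ioo (Y k ω) (Y k ω + h)}
      ≤ ENNReal.ofReal (Real.exp (-(cf * h))) ^ m' := by
  classical
  set μ : Measure ℝ := volume.withDensity fun x => ENNReal.ofReal (f x) with hμ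
  haveI hPμ : IsProbabilityMeasure μ := mu_prob P (Y k) (hY k) μ (hlaw k)
  have hmap : Measure.map (fun ω l => Y l ω) P = Measure.pi fun _ => μ :=
    map_fun_eq_pi Y hY hind μ hlaw
  set c : ℝ≥0∞ := ENNReal.ofReal (Real.exp (-(cf * h))) with hc
  -- the target set in the product space
  set S : Set (Fin (m' + 1) → ℝ) :=
    {v | 0 < v k ∧ v k + h < 1 ∧ ∀ j : Fin m', v (k.succAbove j) ∉ Set.Ioo (v k) (v k + h)}
    with hS
  have hevalk : Measurable fun v : Fin (m' + 1) → ℝ => v k := measurable_pi_apply k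
  have hSmeas : MeasurableSet S := by
    rw [hS, Set.setOf_and, Set.setOf_and]
    refine (measurableSet_lt measurable_const hevalk).inter
      ((measurableSet_lt (hevalk.add_const h) measurable_const).inter ?_)
    have hrw : {v : Fin (m' + 1) → ℝ |
        ∀ j : Fin m', v (k.succAbove j) ∉ Set.Ioo (v k) (v k + h)}
        = ⋂ j : Fin m', ({v : Fin (m' + 1) → ℝ | v k < v (k.succAbove j)}
            ∩ {v | v (k.succAbove j) < v k + h})ᶜ := by
      ext v
      simp [Set.mem_Ioo, not_and_or, Set.mem_iInter, and_comm]
    rw [hrw]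
    refine MeasurableSet.iInter fun j => MeasurableSet.compl ?_
    exact (measurableSet_lt hevalk (measurable_pi_apply _)).inter
      (measurableSet_lt (measurable_pi_apply _) (hevalk.add_const h))
  have hsub : {ω | 0 < Y k ω ∧ Y k ω + h < 1 ∧ ∀ l, Y l ω ∉ Set.Ioo (Y k ω) (Y k ω + h)}
      ⊆ (fun ω l => Y l ω) ⁻¹' S := by
    intro ω hω
    exact ⟨hω.1, hω.2.1, fun j => hω.2.2 (k.succAbove j)⟩
  refine le_trans (measure_mono hsub) ?_
  have hPS : P ((fun ω l => Y l ω) ⁻¹' S) = Measure.pi (fun _ : Fin (m'+1) => μ) S := by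
    rw [← hmap, Measure.map_apply (measurable_pi_lambda _ hY) hSmeas]
  rw [hPS]
  -- move to ℝ × (Fin m' → ℝ)
  set ν : Measure (Fin m' → ℝ) := Measure.pi fun _ => μ with hν
  have mp := measurePreserving_piFinSuccAbove (fun _ : Fin (m' + 1) => μ) k
  set Tset : Set (ℝ × (Fin m' → ℝ)) :=
    {p | 0 < p.1 ∧ p.1 + h < 1 ∧ ∀ j : Fin m', p.2 j ∉ Set.Ioo p.1 (p.1 + h)} with hT
  have hSeq : S = (MeasurableEquiv.piFinSuccAbove (fun _ => ℝ) k) ⁻¹' Tset := by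
    ext v
    simp only [hS, hT, Set.mem_preimage, Set.mem_setOf_eq,
      MeasurableEquiv.piFinSuccAbove_apply, Fin.insertNthEquiv, Equiv.coe_fn_symm_mk,
      Fin.removeNth]
  have hTmeas : MeasurableSet Tset := by
    rw [hT, Set.setOf_and, Set.setOf_and]
    refine (measurableSet_lt measurable_const measurable_fst).inter
      ((measurableSet_lt (measurable_fst.add_const h) measurable_const).inter ?_)
    have hrw : {p : ℝ × (Fin m' → ℝ) | ∀ j : Fin m', p.2 j ∉ Set.Ioo p.1 (p.1 + h)}
        = ⋂ j : Fin m', ({p : ℝ × (Fin m' → ℝ) | p.1 < p.2 j}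
            ∩ {p | p.2 j < p.1 + h})ᶜ := by
      ext p
      simp [Set.mem_Ioo, Set.mem_iInter, and_comm]
    rw [hrw]
    refine MeasurableSet.iInter fun j => MeasurableSet.compl ?_
    exact (measurableSet_lt measurable_fst (((measurable_pi_apply j : Measurable fun w : Fin m' → ℝ => w j)).comp measurable_snd)).inter
      (measurableSet_lt (((measurable_pi_apply j : Measurable fun w : Fin m' → ℝ => w j)).comp measurable_snd)
        (measurable_fst.add_const h))
  rw [hSeq, mp.measure_preimage hTmeas.nullMeasurableSet]
  -- Fubini
  rw [Measure.prod_apply hTmeas]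
  have hslice : ∀ x : ℝ, ν (Prod.mk x ⁻¹' Tset) ≤ c ^ m' := by
    intro x
    by_cases hx : 0 < x ∧ x + h < 1
    · have hIle : ENNReal.ofReal (cf * h) ≤ μ (Set.Ioo x (x + h)) := by
        rw [hμ, withDensity_apply _ measurableSet_Ioo]
        calc ENNReal.ofReal (cf * h) = ENNReal.ofReal cf * volume (Set.Ioo x (x + h)) := by
              rw [Real.volume_Ioo, add_sub_cancel_left, ENNReal.ofReal_mul hcf.le]
          _ = ∫⁻ _y in Set.Ioo x (x + h), ENNReal.ofReal cf ∂volume := by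
              rw [setLIntegral_const]
          _ ≤ ∫⁻ y in Set.Ioo x (x + h), ENNReal.ofReal (f y) ∂volume := by
              refine setLIntegral_mono (hfm.ennreal_ofReal) fun y hy => ?_
              refine ENNReal.ofReal_le_ofReal (hfl y ⟨?_, ?_⟩)
              · exact lt_trans hx.1 hy.1
              · exact lt_trans hy.2 hx.2
      have hcfh1 : cf * h ≤ 1 := by
        have h1 : ENNReal.ofReal (cf * h) ≤ 1 := le_trans hIle prob_le_one
        exact ENNReal.ofReal_le_one.1 h1
      have hcompl : μ (Set.Ioo x (x + h))ᶜ ≤ c := by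
        rw [measure_compl measurableSet_Ioo (measure_ne_top μ _)]
        calc μ Set.univ - μ (Set.Ioo x (x + h)) ≤ 1 - ENNReal.ofReal (cf * h) := by
              rw [measure_univ]; exact tsub_le_tsub_left hIle 1
          _ = ENNReal.ofReal (1 - cf * h) := by
              rw [ENNReal.ofReal_sub 1 (by positivity), ENNReal.ofReal_one]
          _ ≤ c := by
              rw [hc]
              refine ENNReal.ofReal_le_ofReal ?_
              have := Real.add_one_le_exp (-(cf * h))
              linarith
      have hslice_eq : (Prod.mk x ⁻¹' Tset) = Set.pi Set.univ
          fun _ : Fin m' => (Set.Ioo x (x + h))ᶜ := by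
        ext w
        simp only [hT, Set.mem_preimage, Set.mem_setOf_eq, Set.mem_pi, Set.mem_univ,
          true_implies, Set.mem_compl_iff]
        constructor
        · intro hw j; exact hw.2.2 j
        · intro hw; exact ⟨hx.1, hx.2, hw⟩
      rw [hslice_eq, hν, Measure.pi_pi]
      calc (∏ _j : Fin m', μ (Set.Ioo x (x + h))ᶜ) = μ (Set.Ioo x (x + h))ᶜ ^ m' := by
            rw [Finset.prod_const, Finset.card_univ, Fintype.card_fin]
        _ ≤ c ^ m' := pow_le_pow_left' hcompl m'
    · have : (Prod.mk x ⁻¹' Tset) = ∅ := by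
        ext w
        simp only [hT, Set.mem_preimage, Set.mem_setOf_eq, Set.mem_empty_iff_false, iff_false]
        intro hw
        exact hx ⟨hw.1, hw.2.1⟩
      rw [this]
      simp
  calc ∫⁻ x, ν (Prod.mk x ⁻¹' Tset) ∂μ ≤ ∫⁻ _x, c ^ m' ∂μ := lintegral_mono hslice
    _ = c ^ m' := by rw [lintegral_const, measure_univ, mul_one]

section parta
variable {Ω : Type} [MeasurableSpace Ω] (P : Measure Ω) [IsProbabilityMeasure P]
  {n m : ℕ} (T : Fin n → Fin m → Ω → ℝ)

lemma spacing_meas_aux (hT : ∀ i j, Measurable (T i j)) (i : Fin n) (j : ℕ) (h : ℝ) :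
    MeasurableSet {ω | sortedVal (fun k => T i k ω) (j+1)
      - sortedVal (fun k => T i k ω) j < h} := by
  have hsvm : ∀ (j' : ℕ), Measurable fun ω => sortedVal (fun k => T i k ω) j' :=
    fun j' => (measurable_sortedVal j').comp (measurable_pi_lambda _ fun k => hT i k)
  exact measurableSet_lt ((hsvm (j+1)).sub (hsvm j)) measurable_const

lemma spacing_integrable (hT : ∀ i j, Measurable (T i j)) (h : ℝ) :
    Integrable (fun ω => spacingCount n m (fun i k => T i k ω) h) P := by
  simp only [spacingCount]
  apply integrable_finset_sum
  intro i _
  apply integrable_finset_sum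
  intro j _
  have heq : (fun ω => if sortedVal (fun k => T i k ω) (j+1)
      - sortedVal (fun k => T i k ω) j < h then (1:ℝ) else 0)
      = Set.indicator {ω | sortedVal (fun k => T i k ω) (j+1)
          - sortedVal (fun k => T i k ω) j < h} (fun _ => (1:ℝ)) := by
    ext ω
    rw [Set.indicator_apply]
    rfl
  rw [heq]
  exact (integrable_const (1:ℝ)).indicator (spacing_meas_aux T hT i j h)

lemma ae_all_mem (f : ℝ → ℝ) (hf0 : ∀ x, x ∉ Set.Ioo (0:ℝ) 1 → f x = 0)
    (hT : ∀ i j, Measurable (T i j))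
    (hlaw : ∀ i j, Measure.map (T i j) P = volume.withDensity fun x => ENNReal.ofReal (f x)) :
    ∀ᵐ ω ∂P, ∀ i j, T i j ω ∈ Set.Ioo (0:ℝ) 1 := by
  refine ae_all_iff.2 fun i => ae_all_iff.2 fun j => ?_
  exact ae_iff.mpr (ae_mem_Ioo P f hf0 (T i j) (hT i j) (hlaw i j))

lemma part_a (hn : 1 ≤ n) (hm : 2 ≤ m) (hT : ∀ i j, Measurable (T i j)) (f : ℝ → ℝ)
    (hf0 : ∀ x, x ∉ Set.Ioo (0:ℝ) 1 → f x = 0)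
    (hlaw : ∀ i j, Measure.map (T i j) P = volume.withDensity fun x => ENNReal.ofReal (f x))
    {h : ℝ} (hh : 0 < h) (hmh : 4 ≤ (m:ℝ) * h) :
    (1/4 : ℝ) * n * m ≤ ∫ ω, spacingCount n m (fun i k => T i k ω) h ∂P ∧
      ∫ ω, spacingCount n m (fun i k => T i k ω) h ∂P ≤ (n : ℝ) * ((m : ℝ) - 1) := by
  have hint := spacing_integrable P T hT h
  constructor
  · have hlow : ∀ᵐ ω ∂P, (1/4 : ℝ) * n * m ≤ spacingCount n m (fun i k => T i k ω) h := by
      filter_upwards [ae_all_mem P T f hf0 hT hlaw] with ω hω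
      have hbnd : ∀ i : Fin n, (m:ℝ)/4 ≤ ∑ j ∈ Finset.range (m-1),
          if sortedVal (fun k => T i k ω) (j+1) - sortedVal (fun k => T i k ω) j < h
          then (1:ℝ) else 0 :=
        fun i => count_lower hm _ (fun k => hω i k) hh hmh
      calc (1/4:ℝ) * n * m = ∑ _i : Fin n, (m:ℝ)/4 := by
            rw [Finset.sum_const, Finset.card_univ, Fintype.card_fin, nsmul_eq_mul]; ring
        _ ≤ spacingCount n m (fun i k => T i k ω) h := Finset.sum_le_sum fun i _ => hbnd i
    have := integral_mono_ae (integrable_const ((1/4:ℝ) * n * m)) hint hlow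
    simpa using this
  · have hup : ∀ ω, spacingCount n m (fun i k => T i k ω) h ≤ (n : ℝ) * ((m:ℝ) - 1) := by
      intro ω
      have hcast : ((m - 1 : ℕ) : ℝ) = (m:ℝ) - 1 := by
        have h1 : 1 ≤ m := by omega
        push_cast [h1]
        ring
      calc spacingCount n m (fun i k => T i k ω) h
          ≤ ∑ _i : Fin n, ((m - 1 : ℕ) : ℝ) := Finset.sum_le_sum fun i _ => count_upper _ h
        _ = (n : ℝ) * ((m:ℝ) - 1) := by
            rw [Finset.sum_const, Finset.card_univ, Fintype.card_fin, nsmul_eq_mul, hcast]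
    have := integral_mono hint (integrable_const ((n : ℝ) * ((m:ℝ) - 1))) hup
    simpa using this
end parta

section partb
variable {Ω : Type} [MeasurableSpace Ω] (P : Measure Ω) [IsProbabilityMeasure P]

/-- If all coordinates of an individual lie in `(0,1)` and no "bad event" occurs,
then all spacings are `< h`. -/
lemma gaps_lt {m : ℕ} (v : Fin m → ℝ) (hv : ∀ k, v k ∈ Set.Ioo (0:ℝ) 1) {h : ℝ}
    (hnb : ∀ k : Fin m, ¬ (0 < v k ∧ v k + h < 1 ∧
      ∀ l, v l ∉ Set.Ioo (v k) (v k + h)))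
    (j : ℕ) (hj : j ∈ Finset.range (m - 1)) :
    sortedVal v (j+1) - sortedVal v j < h := by
  rw [Finset.mem_range] at hj
  have hjm : j < m := by omega
  have hj1m : j + 1 < m := by omega
  by_contra hge
  push_neg at hge
  set k : Fin m := Tuple.sort v ⟨j, hjm⟩ with hk
  have hsvj : sortedVal v j = v k := by rw [sortedVal, dif_pos hjm]
  apply hnb k
  refine ⟨(hv k).1, ?_, ?_⟩
  · have h1 : sortedVal v (j+1) < 1 := (sortedVal_mem v hj1m _ hv).2
    have : v k + h ≤ sortedVal v (j+1) := by rw [← hsvj]; linarith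
    linarith
  · intro l hl
    set p : Fin m := (Tuple.sort v).symm l with hp
    have hvl : v l = v (Tuple.sort v p) := by rw [hp, Equiv.apply_symm_apply]
    rcases le_or_gt (p : ℕ) j with hple | hpgt
    · have h2 : v (Tuple.sort v p) ≤ sortedVal v j := by
        have := sortedVal_mono v hple hjm
        rwa [sortedVal, dif_pos (lt_of_le_of_lt hple hjm), Fin.eta] at this
      rw [hsvj] at h2
      rw [hvl] at hl
      exact absurd hl.1 (not_lt.2 h2)
    · have hplt : (p : ℕ) < m := p.isLt
      have h2 : sortedVal v (j+1) ≤ v (Tuple.sort v p) := by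
        have hmono := sortedVal_mono v (show j + 1 ≤ (p:ℕ) from hpgt) hplt
        have hsvp : sortedVal v (p : ℕ) = v (Tuple.sort v p) := by
          rw [sortedVal, dif_pos hplt, Fin.eta]
        rwa [hsvp] at hmono
      have h3 : v k + h ≤ v l := by
        rw [hvl]
        have : v k + h ≤ sortedVal v (j+1) := by rw [← hsvj]; linarith
        linarith
      rw [hvl] at hl
      linarith [hl.2, h2]

lemma good_meas {n m : ℕ} (T : Fin n → Fin m → Ω → ℝ) (hT : ∀ i j, Measurable (T i j))
    (h : ℝ) (i : Fin n) (k : Fin m) :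
    MeasurableSet {ω | 0 < T i k ω ∧ T i k ω + h < 1 ∧
      ∀ l, T i l ω ∉ Set.Ioo (T i k ω) (T i k ω + h)} := by
  rw [Set.setOf_and, Set.setOf_and]
  refine (measurableSet_lt measurable_const (hT i k)).inter
    ((measurableSet_lt ((hT i k).add_const h) measurable_const).inter ?_)
  have hrw : {ω | ∀ l, T i l ω ∉ Set.Ioo (T i k ω) (T i k ω + h)}
      = ⋂ l : Fin m, ({ω | T i k ω < T i l ω} ∩ {ω | T i l ω < T i k ω + h})ᶜ := by
    ext ω
    simp [Set.mem_Ioo, Set.mem_iInter, and_comm]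
  rw [hrw]
  exact MeasurableSet.iInter fun l => (MeasurableSet.compl
    ((measurableSet_lt (hT i k) (hT i l)).inter
      (measurableSet_lt (hT i l) ((hT i k).add_const h))))

lemma part_b_core {cf : ℝ} (hcf : 0 < cf) {n m' : ℕ} (hn : 1 ≤ n)
    (T : Fin n → Fin (m' + 1) → Ω → ℝ) (hT : ∀ i j, Measurable (T i j)) (f : ℝ → ℝ)
    (hfm : Measurable f) (hfl : ∀ x ∈ Set.Ioo (0:ℝ) 1, cf ≤ f x)
    (hf0 : ∀ x, x ∉ Set.Ioo (0:ℝ) 1 → f x = 0)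
    (hind : iIndepFun
      (fun (p : Fin n × Fin (m' + 1)) ω => T p.1 p.2 ω) P)
    (hlaw : ∀ i j, Measure.map (T i j) P = volume.withDensity fun x => ENNReal.ofReal (f x))
    {h : ℝ} (hh : 0 < h) :
    1 - (n : ℝ≥0∞) * (m' + 1 : ℕ) * ENNReal.ofReal (Real.exp (-(cf * h))) ^ m'
      ≤ P {ω | spacingCount n (m' + 1) (fun i k => T i k ω) h
          = (n : ℝ) * (((m' + 1 : ℕ) : ℝ) - 1)} := by
  classical
  set B : Fin n → Fin (m' + 1) → Set Ω := fun i k =>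
    {ω | 0 < T i k ω ∧ T i k ω + h < 1 ∧
      ∀ l, T i l ω ∉ Set.Ioo (T i k ω) (T i k ω + h)} with hB
  set G : Set Ω := {ω | ∀ i j, T i j ω ∈ Set.Ioo (0:ℝ) 1} with hG
  have hGmeas : MeasurableSet G := by
    have : G = ⋂ i, ⋂ j, (T i j) ⁻¹' Set.Ioo (0:ℝ) 1 := by
      ext ω; simp [hG]
    rw [this]
    exact MeasurableSet.iInter fun i => MeasurableSet.iInter fun j =>
      (hT i j) measurableSet_Ioo
  set U : Set Ω := Gᶜ ∪ ⋃ i, ⋃ k, B i k with hU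
  have hUmeas : MeasurableSet U :=
    (hGmeas.compl).union (MeasurableSet.iUnion fun i => MeasurableSet.iUnion fun k =>
      good_meas T hT h i k)
  have hincl : Uᶜ ⊆ {ω | spacingCount n (m' + 1) (fun i k => T i k ω) h
      = (n : ℝ) * (((m' + 1 : ℕ) : ℝ) - 1)} := by
    intro ω hω
    rw [hU, Set.compl_union, compl_compl] at hω
    obtain ⟨hωG, hωB⟩ := hω
    rw [Set.compl_iUnion] at hωB
    simp only [Set.mem_iInter, Set.compl_iUnion, Set.mem_compl_iff] at hωB
    have hgaps : ∀ i : Fin n, ∀ j ∈ Finset.range ((m' + 1) - 1),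
        sortedVal (fun k => T i k ω) (j+1) - sortedVal (fun k => T i k ω) j < h := by
      intro i j hj
      refine gaps_lt (fun k => T i k ω) (fun k => hωG i k) ?_ j hj
      intro k hk
      exact hωB i k hk
    show spacingCount n (m' + 1) (fun i k => T i k ω) h = (n : ℝ) * (((m' + 1 : ℕ) : ℝ) - 1)
    rw [spacingCount]
    rw [Finset.sum_congr rfl fun i _ => count_eq_of_gaps_lt (fun k => T i k ω) h (hgaps i)]
    rw [Finset.sum_const, Finset.card_univ, Fintype.card_fin, nsmul_eq_mul]
    congr 1
    push_cast
    ring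
  have hGc : P Gᶜ = 0 := by
    have : Gᶜ = ⋃ i, ⋃ j, {ω | T i j ω ∉ Set.Ioo (0:ℝ) 1} := by
      ext ω; simp [hG]
    rw [this]
    exact measure_iUnion_null fun i => measure_iUnion_null fun j =>
      ae_mem_Ioo P f hf0 (T i j) (hT i j) (hlaw i j)
  have hPB : ∀ i k, P (B i k) ≤ ENNReal.ofReal (Real.exp (-(cf * h))) ^ m' := by
    intro i k
    exact bad_bound hcf (fun l => T i l) (fun l => hT i l) (iIndep_row T hind i)
      f hfm hfl (fun l => hlaw i l) h hh k
  have hPU : P U ≤ (n : ℝ≥0∞) * (m' + 1 : ℕ) * ENNReal.ofReal (Real.exp (-(cf * h))) ^ m' := by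
    calc P U ≤ P Gᶜ + P (⋃ i, ⋃ k, B i k) := measure_union_le _ _
      _ = P (⋃ i, ⋃ k, B i k) := by rw [hGc, zero_add]
      _ ≤ ∑ i : Fin n, P (⋃ k, B i k) := measure_iUnion_fintype_le _ _
      _ ≤ ∑ i : Fin n, ∑ k : Fin (m' + 1), P (B i k) :=
          Finset.sum_le_sum fun i _ => measure_iUnion_fintype_le _ _
      _ ≤ ∑ _i : Fin n, ∑ _k : Fin (m' + 1),
            ENNReal.ofReal (Real.exp (-(cf * h))) ^ m' :=
          Finset.sum_le_sum fun i _ => Finset.sum_le_sum fun k _ => hPB i k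
      _ = (n : ℝ≥0∞) * (m' + 1 : ℕ) * ENNReal.ofReal (Real.exp (-(cf * h))) ^ m' := by
          simp [Finset.sum_const, Finset.card_univ, mul_assoc]
  calc 1 - (n : ℝ≥0∞) * (m' + 1 : ℕ) * ENNReal.ofReal (Real.exp (-(cf * h))) ^ m'
      ≤ 1 - P U := tsub_le_tsub_left hPU 1
    _ = P Uᶜ := by rw [measure_compl hUmeas (measure_ne_top P U), measure_univ]
    _ ≤ _ := measure_mono hincl

lemma part_b_trivial {n m : ℕ} (hm : 1 ≤ m)
    (T : Fin n → Fin m → Ω → ℝ) (hT : ∀ i j, Measurable (T i j)) (f : ℝ → ℝ)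
    (hf0 : ∀ x, x ∉ Set.Ioo (0:ℝ) 1 → f x = 0)
    (hlaw : ∀ i j, Measure.map (T i j) P = volume.withDensity fun x => ENNReal.ofReal (f x))
    {h : ℝ} (hh : 1 ≤ h) :
    P {ω | spacingCount n m (fun i k => T i k ω) h = (n : ℝ) * ((m : ℝ) - 1)} = 1 := by
  classical
  set G : Set Ω := {ω | ∀ i j, T i j ω ∈ Set.Ioo (0:ℝ) 1} with hG
  have hGsub : G ⊆ {ω | spacingCount n m (fun i k => T i k ω) h
      = (n : ℝ) * ((m : ℝ) - 1)} := by
    intro ω hω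
    have hgaps : ∀ i : Fin n, ∀ j ∈ Finset.range (m - 1),
        sortedVal (fun k => T i k ω) (j+1) - sortedVal (fun k => T i k ω) j < h := by
      intro i j hj
      rw [Finset.mem_range] at hj
      have hjm : j < m := by omega
      have hj1m : j + 1 < m := by omega
      have h1 := (sortedVal_mem (fun k => T i k ω) hj1m _ (fun k => hω i k)).2
      have h2 := (sortedVal_mem (fun k => T i k ω) hjm _ (fun k => hω i k)).1
      linarith
    show spacingCount n m (fun i k => T i k ω) h = (n : ℝ) * ((m : ℝ) - 1)
    rw [spacingCount]
    rw [Finset.sum_congr rfl fun i _ => count_eq_of_gaps_lt (fun k => T i k ω) h (hgaps i)]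
    rw [Finset.sum_const, Finset.card_univ, Fintype.card_fin, nsmul_eq_mul]
    congr 1
    push_cast [hm]
    ring
  have hGfull : P G = 1 := by
    have hGc : P Gᶜ = 0 := by
      have : Gᶜ = ⋃ i, ⋃ j, {ω | T i j ω ∉ Set.Ioo (0:ℝ) 1} := by
        ext ω; simp [hG]
      rw [this]
      exact measure_iUnion_null fun i => measure_iUnion_null fun j =>
        ae_mem_Ioo P f hf0 (T i j) (hT i j) (hlaw i j)
    have hGmeas : MeasurableSet G := by
      have : G = ⋂ i, ⋂ j, (T i j) ⁻¹' Set.Ioo (0:ℝ) 1 := by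
        ext ω; simp [hG]
      rw [this]
      exact MeasurableSet.iInter fun i => MeasurableSet.iInter fun j =>
        (hT i j) measurableSet_Ioo
    exact (prob_compl_eq_zero_iff hGmeas).1 hGc
  refine le_antisymm prob_le_one ?_
  rw [← hGfull]
  exact measure_mono hGsub

lemma part_b_main {Ω : Type} [MeasurableSpace Ω] (P : Measure Ω) [IsProbabilityMeasure P]
    {cf : ℝ} (hcf : 0 < cf) {n m : ℕ} (hn : 1 ≤ n) (hm : 2 ≤ m)
    (T : Fin n → Fin m → Ω → ℝ) (hT : ∀ i j, Measurable (T i j)) (f : ℝ → ℝ)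
    (hfm : Measurable f) (hfl : ∀ x ∈ Set.Ioo (0:ℝ) 1, cf ≤ f x)
    (hf0 : ∀ x, x ∉ Set.Ioo (0:ℝ) 1 → f x = 0)
    (hind : iIndepFun
      (fun (p : Fin n × Fin m) ω => T p.1 p.2 ω) P)
    (hlaw : ∀ i j, Measure.map (T i j) P = volume.withDensity fun x => ENNReal.ofReal (f x))
    {h : ℝ} (hh : 0 < h) :
    1 - (n : ℝ≥0∞) * (m : ℕ) * ENNReal.ofReal (Real.exp (-(cf * h))) ^ (m - 1)
      ≤ P {ω | spacingCount n m (fun i k => T i k ω) h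
          = (n : ℝ) * ((m : ℝ) - 1)} := by
  obtain ⟨m', rfl⟩ : ∃ m', m = m' + 1 := ⟨m - 1, by omega⟩
  have := part_b_core P hcf hn T hT f hfm hfl hf0 hind hlaw hh
  simpa using this

lemma real_ineq {cf : ℝ} (hcf : 0 < cf) {n m : ℕ} (hn : 1 ≤ n) (hm : 2 ≤ m) {h : ℝ}
    (hh : 0 < h) (hh1 : h < 1) :
    (n:ℝ) * m * Real.exp (-(cf * h)) ^ (m - 1)
      ≤ Real.exp cf * Real.exp (-(cf * m * h - Real.log (m * n))) := by
  have hnR : (1:ℝ) ≤ (n:ℝ) := by exact_mod_cast hn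
  have hmR : (2:ℝ) ≤ (m:ℝ) := by exact_mod_cast hm
  have hmn : (0:ℝ) < (m:ℝ) * n := by nlinarith
  have hexp : Real.exp (-(cf * m * h - Real.log (m * n)))
      = (m * n : ℝ) * Real.exp (-(cf * m * h)) := by
    rw [neg_sub, Real.exp_sub, Real.exp_log hmn, div_eq_mul_inv, ← Real.exp_neg]
  rw [hexp]
  have hpow : Real.exp (-(cf * h)) ^ (m - 1)
      = Real.exp (((m - 1 : ℕ) : ℝ) * (-(cf * h))) := (Real.exp_nat_mul _ _).symm
  rw [hpow]
  have hcast : ((m - 1 : ℕ) : ℝ) = (m:ℝ) - 1 := by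
    push_cast [show 1 ≤ m by omega]
    ring
  have hkey : Real.exp (((m - 1 : ℕ) : ℝ) * (-(cf * h)))
      ≤ Real.exp cf * Real.exp (-(cf * m * h)) := by
    rw [← Real.exp_add]
    apply Real.exp_le_exp.2
    rw [hcast]
    nlinarith
  have hnm : (0:ℝ) ≤ (n:ℝ) * m := by positivity
  calc (n:ℝ) * m * Real.exp (((m - 1 : ℕ) : ℝ) * (-(cf * h)))
      ≤ (n:ℝ) * m * (Real.exp cf * Real.exp (-(cf * m * h))) :=
        mul_le_mul_of_nonneg_left hkey hnm
    _ = Real.exp cf * ((m * n : ℝ) * Real.exp (-(cf * m * h))) := by ring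

/-- (a) there are constants `c₁ > 0` and `δ > 0` depending only on
`c_f, C_f` such that `c₁·n·m ≤ E[Ñ_h] ≤ n·(m-1)` whenever `m·h ≥ δ`; (b) if
`m_n → ∞` and `c_f·m_n·h_n - log(m_n·n) → ∞` then `P(Ñ_{h_n} = n·(m_n - 1)) → 1`. -/
theorem statement3 (cf Cf : ℝ) (hcf : 0 < cf) (hcC : cf ≤ Cf) :
    (∃ c₁ δ : ℝ, 0 < c₁ ∧ 0 < δ ∧
      ∀ (f : ℝ → ℝ), Measurable f →
        (∀ x ∈ Set.Ioo (0 : ℝ) 1, cf ≤ f x ∧ f x ≤ Cf) →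
        (∀ x, x ∉ Set.Ioo (0 : ℝ) 1 → f x = 0) →
        ∀ (n : ℕ), 1 ≤ n → ∀ (m : ℕ), 2 ≤ m → ∀ (h : ℝ), 0 < h → δ ≤ (m : ℝ) * h →
        ∀ (Ω : Type) (_ : MeasurableSpace Ω) (P : Measure Ω), IsProbabilityMeasure P →
        ∀ (T : Fin n → Fin m → Ω → ℝ),
          (∀ i j, Measurable (T i j)) →
          iIndepFun
            (fun (p : Fin n × Fin m) ω => T p.1 p.2 ω) P →
          (∀ i j, Measure.map (T i j) P
              = volume.withDensity (fun x => ENNReal.ofReal (f x))) →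
          c₁ * n * m ≤ ∫ ω, spacingCount n m (fun i k => T i k ω) h ∂P ∧
            ∫ ω, spacingCount n m (fun i k => T i k ω) h ∂P ≤ (n : ℝ) * (m - 1)) ∧
    (∀ (f : ℝ → ℝ), Measurable f →
        (∀ x ∈ Set.Ioo (0 : ℝ) 1, cf ≤ f x ∧ f x ≤ Cf) →
        (∀ x, x ∉ Set.Ioo (0 : ℝ) 1 → f x = 0) →
        ∀ (msec : ℕ → ℕ) (hsec : ℕ → ℝ),
        Tendsto msec atTop atTop → (∀ n, 0 < hsec n) →
        Tendsto (fun n : ℕ => cf * msec n * hsec n - Real.log (msec n * n)) atTop atTop →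
        ∀ (Ω : ℕ → Type) (_ : ∀ n, MeasurableSpace (Ω n)) (P : ∀ n, Measure (Ω n)),
        (∀ n, IsProbabilityMeasure (P n)) →
        ∀ (T : ∀ n, Fin n → Fin (msec n) → Ω n → ℝ),
          (∀ n i j, Measurable (T n i j)) →
          (∀ n, iIndepFun
            (fun (p : Fin n × Fin (msec n)) ω => T n p.1 p.2 ω) (P n)) →
          (∀ n i j, Measure.map (T n i j) (P n)
              = volume.withDensity (fun x => ENNReal.ofReal (f x))) →
          Tendsto (fun n : ℕ =>
              P n {ω | spacingCount n (msec n) (fun i k => T n i k ω) (hsec n)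
                = (n : ℝ) * (msec n - 1)})
            atTop (nhds 1)) := by
  constructor
  · refine ⟨1/4, 4, by norm_num, by norm_num, ?_⟩
    intro f hfm hfb hf0 n hn m hm h hh hδ Ω mΩ P hPP T hTmeas hTind hTlaw
    haveI := hPP
    exact part_a P T hn hm hTmeas f hf0 hTlaw hh hδ
  · intro f hfm hfb hf0 msec hsec hmto hhpos htend Ω mΩ P hP T hTmeas hTind hTlaw
    set b : ℕ → ℝ := fun n => cf * msec n * hsec n - Real.log (msec n * n) with hb
    set ε : ℕ → ℝ≥0∞ := fun n => ENNReal.ofReal (Real.exp cf * Real.exp (-(b n))) with hε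
    set A : ℕ → ℝ≥0∞ := fun n =>
      P n {ω | spacingCount n (msec n) (fun i k => T n i k ω) (hsec n)
        = (n : ℝ) * (msec n - 1)} with hA
    have hε0 : Tendsto ε atTop (nhds 0) := by
      have h1 : Tendsto (fun n => -(b n)) atTop atBot := tendsto_neg_atTop_atBot.comp htend
      have h2 : Tendsto (fun n => Real.exp (-(b n))) atTop (nhds 0) :=
        Real.tendsto_exp_atBot.comp h1
      have h3 : Tendsto (fun n => Real.exp cf * Real.exp (-(b n))) atTop (nhds 0) := by
        have := h2.const_mul (Real.exp cf)
        simpa using this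
      have h4 := (ENNReal.continuous_ofReal.tendsto 0).comp h3
      simpa [hε, Function.comp_def] using h4
    have hup : ∀ n, A n ≤ 1 := fun n => by
      haveI := hP n
      exact prob_le_one
    have hlow : ∀ᶠ n in atTop, 1 - ε n ≤ A n := by
      have hev : ∀ᶠ n in atTop, 2 ≤ msec n ∧ 1 ≤ n := by
        filter_upwards [hmto.eventually_ge_atTop 2, eventually_ge_atTop 1] with n h1 h2
        exact ⟨h1, h2⟩
      filter_upwards [hev] with n hn
      obtain ⟨hm2, hn1⟩ := hn
      haveI := hP n
      rcases le_or_gt 1 (hsec n) with hbig | hsmall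
      · have htriv := part_b_trivial (P n) (show 1 ≤ msec n by omega) (T n) (hTmeas n) f hf0
          (hTlaw n) hbig
        calc 1 - ε n ≤ 1 := tsub_le_self
          _ = A n := htriv.symm
      · have hmain := part_b_main (P n) hcf hn1 hm2 (T n) (hTmeas n) f hfm
          (fun x hx => (hfb x hx).1) hf0 (hTind n) (hTlaw n) (hhpos n)
        refine le_trans ?_ hmain
        apply tsub_le_tsub_left
        have hXeq : (n : ℝ≥0∞) * (msec n : ℕ)
              * ENNReal.ofReal (Real.exp (-(cf * hsec n))) ^ (msec n - 1)
            = ENNReal.ofReal ((n:ℝ) * (msec n : ℝ)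
                * Real.exp (-(cf * hsec n)) ^ (msec n - 1)) := by
          rw [ENNReal.ofReal_mul (by positivity), ENNReal.ofReal_mul (by positivity),
            ENNReal.ofReal_pow (Real.exp_nonneg _), ENNReal.ofReal_natCast,
            ENNReal.ofReal_natCast]
        rw [hXeq, hε]
        exact ENNReal.ofReal_le_ofReal
          (real_ineq hcf hn1 hm2 (hhpos n) hsmall)
    refine tendsto_of_tendsto_of_tendsto_of_le_of_le' ?_ tendsto_const_nhds hlow
      (Eventually.of_forall hup)
    have : Tendsto (fun n => (1:ℝ≥0∞) - ε n) atTop (nhds (1 - 0)) :=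
      ENNReal.Tendsto.sub tendsto_const_nhds hε0 (Or.inl ENNReal.one_ne_top)
    simpa using this
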